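/- Fix R > 0 and x₀ ∈ (0, 1), and let C(x) = exp(−x²/R²). For each l > 0, let u_l be the solution of the one-dimensional boundary value problem −(e^{−ξ_l(x)} u_l′(x))′ = 1 on (0,1) with u_l(0) = u_l(1) = 0, where ξ_l(x) = l · C(x − x₀); explicitly, u_l′(x) = e^{ξ_l(x)} (c_l − x) with c_l = (∫₀¹ y e^{ξ_l(y)} dy)/(∫₀¹ e^{ξ_l(y)} dy). Then there exist constants κ > 0 and α ∈ ℝ such that lim_{l → ∞} (sup_{x ∈ [0,1]} |u_l′(x)|) / (l^α e^l) = κ; that is, the maximal strain satisfies sup_{[0,1]} |u_l′| ∼ κ l^α e^l as l → ∞. -/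

import Mathlib

open MeasureTheory Filter

section MaximalStrainAux

open Real intervalIntegral


noncomputable def Ef (R x₀ l x : ℝ) : ℝ := Real.exp (l * Real.exp (-(x - x₀) ^ 2 / R ^ 2))

lemma Ef_cont (R x₀ l : ℝ) : Continuous (Ef R x₀ l) := by unfold Ef; fun_prop

lemma Ef_pos (R x₀ l x : ℝ) : 0 < Ef R x₀ l x := Real.exp_pos _

lemma Ef_int (R x₀ l a b : ℝ) : IntervalIntegrable (Ef R x₀ l) volume a b :=
  (Ef_cont R x₀ l).intervalIntegrable a b

lemma Cfac_mem (R x₀ x : ℝ) : 0 < Real.exp (-(x - x₀) ^ 2 / R ^ 2) ∧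
    Real.exp (-(x - x₀) ^ 2 / R ^ 2) ≤ 1 := by
  constructor
  · exact Real.exp_pos _
  · apply Real.exp_le_one_iff.2
    have h1 : 0 ≤ (x - x₀)^2 / R^2 := by positivity
    have : -(x - x₀) ^ 2 / R ^ 2 = -((x - x₀) ^ 2 / R ^ 2) := by ring
    rw [this]; linarith

lemma Ef_le (R x₀ l x : ℝ) (hl : 0 ≤ l) : Ef R x₀ l x ≤ Real.exp l := by
  apply Real.exp_le_exp.2
  obtain ⟨h0, h1⟩ := Cfac_mem R x₀ x
  nlinarith

lemma exp_neg_le_quad {u : ℝ} (hu : 0 ≤ u) : Real.exp (-u) ≤ 1 - u + u ^ 2 := by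
  have h1 : 1 + u ≤ Real.exp u := by linarith [Real.add_one_le_exp u]
  have hpos : (0:ℝ) < 1 + u := by linarith
  have h2 : Real.exp (-u) ≤ (1 + u)⁻¹ := by
    rw [Real.exp_neg]
    exact inv_anti₀ hpos h1
  have h3 : (1 + u)⁻¹ ≤ 1 - u + u ^ 2 := by
    rw [inv_eq_one_div, div_le_iff₀ hpos]
    nlinarith [pow_nonneg hu 3]
  linarith

lemma gauss_opt {L s : ℝ} (hL : 0 < L) (hs : 0 ≤ s) :
    Real.exp (-(L * s)) * Real.sqrt s ≤ 1 / Real.sqrt (2 * Real.exp 1 * L) := by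
  have h1 : Real.sqrt (2 * Real.exp 1 * L) * Real.sqrt s ≤ Real.exp (L * s) := by
    rw [← Real.sqrt_mul (by positivity)]
    have he : 2 * Real.exp 1 * L * s = Real.exp 1 * (2 * (L * s)) := by ring
    rw [he]
    have h2 : Real.exp 1 * (2 * (L * s)) ≤ Real.exp (2 * (L * s)) := by
      calc Real.exp 1 * (2 * (L * s)) ≤ Real.exp 1 * Real.exp (2 * (L * s) - 1) := by
            apply mul_le_mul_of_nonneg_left _ (Real.exp_pos 1).le
            linarith [Real.add_one_le_exp (2 * (L * s) - 1)]
        _ = Real.exp (2 * (L * s)) := by rw [← Real.exp_add]; ring_nf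
    calc Real.sqrt (Real.exp 1 * (2 * (L * s))) ≤ Real.sqrt (Real.exp (2 * (L * s))) :=
          Real.sqrt_le_sqrt h2
      _ = Real.exp (L * s) := by
          rw [show 2 * (L * s) = L * s + L * s by ring, Real.exp_add,
            Real.sqrt_mul_self (Real.exp_pos _).le]
  have hQ : 0 < Real.sqrt (2 * Real.exp 1 * L) := Real.sqrt_pos.2 (by positivity)
  rw [le_div_iff₀ hQ]
  calc Real.exp (-(L * s)) * Real.sqrt s * Real.sqrt (2 * Real.exp 1 * L)
      = Real.sqrt (2 * Real.exp 1 * L) * Real.sqrt s * Real.exp (-(L * s)) := by ring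
    _ ≤ Real.exp (L * s) * Real.exp (-(L * s)) :=
        mul_le_mul_of_nonneg_right h1 (Real.exp_pos _).le
    _ = 1 := by rw [← Real.exp_add]; simp



lemma ssl_ge_two {l : ℝ} (hl : 16 ≤ l) : 2 ≤ Real.sqrt (Real.sqrt l) := by
  have h4 : (4:ℝ) ≤ Real.sqrt l := by
    rw [show (4:ℝ) = Real.sqrt 16 by rw [show (16:ℝ) = 4 ^ 2 by norm_num, Real.sqrt_sq]; norm_num]
    exact Real.sqrt_le_sqrt hl
  rw [show (2:ℝ) = Real.sqrt 4 by rw [show (4:ℝ) = 2 ^ 2 by norm_num, Real.sqrt_sq]; norm_num]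
  exact Real.sqrt_le_sqrt h4

lemma pointwise_upper {R x₀ l : ℝ} (hR : 0 < R) (hl : 16 ≤ l) (x : ℝ) (hx : |x - x₀| ≤ 1) :
    Ef R x₀ l x * |x - x₀| ≤
      R * Real.exp l / Real.sqrt (2 * Real.exp 1 * (l * (1 - 1 / Real.sqrt (Real.sqrt l))))
        + Real.exp (l - l / (2 * Real.sqrt (Real.sqrt l))) := by
  have hl0 : (0:ℝ) < l := by linarith
  have hq2 : 2 ≤ Real.sqrt (Real.sqrt l) := ssl_ge_two hl
  set q := Real.sqrt (Real.sqrt l) with hqdef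
  have hq0 : 0 < q := by linarith
  set δ := 1 / q with hδdef
  have hδ0 : 0 < δ := by positivity
  have hδh : δ ≤ 1 / 2 := by
    rw [hδdef]
    exact (div_le_div_iff₀ hq0 (by norm_num)).2 (by linarith)
  set s := (x - x₀) ^ 2 / R ^ 2 with hsdef
  have hs0 : 0 ≤ s := by positivity
  have habs : |x - x₀| = R * Real.sqrt s := by
    have h1 : Real.sqrt s = |x - x₀| / R := by
      rw [hsdef, show (x - x₀) ^ 2 / R ^ 2 = (|x - x₀| / R) ^ 2 by rw [div_pow, sq_abs],
        Real.sqrt_sq (by positivity)]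
    rw [h1]; field_simp
  have hEf : Ef R x₀ l x = Real.exp (l * Real.exp (-s)) := by
    rw [Ef, show -(x - x₀) ^ 2 / R ^ 2 = -s by rw [hsdef]; ring]
  have hlam : 0 < l * (1 - δ) := by nlinarith
  by_cases hcase : s ≤ δ
  · have h1 : Real.exp (-s) ≤ 1 - s * (1 - δ) := by
      have h2 := exp_neg_le_quad hs0
      nlinarith
    have hmain : Ef R x₀ l x * |x - x₀| ≤
        R * Real.exp l / Real.sqrt (2 * Real.exp 1 * (l * (1 - δ))) := by
      calc Ef R x₀ l x * |x - x₀| = Real.exp (l * Real.exp (-s)) * (R * Real.sqrt s) := by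
            rw [hEf, habs]
        _ ≤ Real.exp (l - l * (1 - δ) * s) * (R * Real.sqrt s) := by
            apply mul_le_mul_of_nonneg_right _ (by positivity)
            apply Real.exp_le_exp.2
            nlinarith
        _ = R * (Real.exp l * (Real.exp (-(l * (1 - δ) * s)) * Real.sqrt s)) := by
            rw [show l - l * (1 - δ) * s = l + -(l * (1 - δ) * s) by ring, Real.exp_add]; ring
        _ ≤ R * (Real.exp l * (1 / Real.sqrt (2 * Real.exp 1 * (l * (1 - δ))))) := by
            apply mul_le_mul_of_nonneg_left _ hR.le
            apply mul_le_mul_of_nonneg_left _ (Real.exp_pos _).le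
            exact gauss_opt hlam hs0
        _ = R * Real.exp l / Real.sqrt (2 * Real.exp 1 * (l * (1 - δ))) := by ring
    have := Real.exp_pos (l - l / (2 * q))
    linarith
  · push_neg at hcase
    have h1 : Real.exp (-s) ≤ 1 - δ / 2 := by
      have h2 : Real.exp (-s) ≤ Real.exp (-δ) := Real.exp_le_exp.2 (by linarith)
      have h3 := exp_neg_le_quad hδ0.le
      nlinarith
    have hmain : Ef R x₀ l x * |x - x₀| ≤ Real.exp (l - l / (2 * q)) := by
      calc Ef R x₀ l x * |x - x₀| ≤ Real.exp (l * (1 - δ / 2)) * 1 := by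
            apply mul_le_mul _ hx (abs_nonneg _) (Real.exp_pos _).le
            rw [hEf]
            apply Real.exp_le_exp.2
            nlinarith
        _ = Real.exp (l - l / (2 * q)) := by
            rw [mul_one]
            congr 1
            rw [hδdef]
            field_simp
    have hpos : 0 ≤ R * Real.exp l / Real.sqrt (2 * Real.exp 1 * (l * (1 - δ))) := by positivity
    linarith


noncomputable def I0 (R x₀ l : ℝ) : ℝ := ∫ y in (0:ℝ)..1, Ef R x₀ l y
noncomputable def I1 (R x₀ l : ℝ) : ℝ := ∫ y in (0:ℝ)..1, y * Ef R x₀ l y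
noncomputable def cva (R x₀ l : ℝ) : ℝ := I1 R x₀ l / I0 R x₀ l

lemma EfS_int (R x₀ l a b : ℝ) :
    IntervalIntegrable (fun y => (y - x₀) * Ef R x₀ l y) volume a b :=
  ((continuous_id.sub continuous_const).mul (Ef_cont R x₀ l)).intervalIntegrable a b

lemma I0_pos (R x₀ l : ℝ) : 0 < I0 R x₀ l :=
  intervalIntegral_pos_of_pos (Ef_int R x₀ l 0 1) (fun x => Ef_pos R x₀ l x) (by norm_num)

lemma num_eq (R x₀ l : ℝ) :
    I1 R x₀ l - x₀ * I0 R x₀ l = ∫ y in (0:ℝ)..1, (y - x₀) * Ef R x₀ l y := by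
  rw [I1, I0, ← intervalIntegral.integral_const_mul, ← intervalIntegral.integral_sub]
  · congr 1; funext y; ring
  · exact (continuous_id.mul (Ef_cont R x₀ l)).intervalIntegrable 0 1
  · exact (continuous_const.mul (Ef_cont R x₀ l)).intervalIntegrable 0 1

lemma middle_zero (R x₀ l m : ℝ) :
    ∫ y in (x₀ - m)..(x₀ + m), (y - x₀) * Ef R x₀ l y = 0 := by
  have hfg : (fun y => (y - x₀) * Ef R x₀ l y)
      = fun y => (fun t => t * Real.exp (l * Real.exp (-t ^ 2 / R ^ 2))) (y - x₀) := by
    funext y; simp [Ef]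
  set g : ℝ → ℝ := fun t => t * Real.exp (l * Real.exp (-t ^ 2 / R ^ 2)) with hg
  have hgodd : ∀ t, g (-t) = -g t := by
    intro t; simp [hg, neg_sq]
  have hgint : ∀ a b : ℝ, IntervalIntegrable g volume a b := by
    intro a b
    apply Continuous.intervalIntegrable
    fun_prop
  rw [hfg, intervalIntegral.integral_comp_sub_right g x₀]
  have h1 : x₀ - m - x₀ = -m := by ring
  have h2 : x₀ + m - x₀ = m := by ring
  rw [h1, h2]
  have hsplit : (∫ t in (-m)..(0:ℝ), g t) + ∫ t in (0:ℝ)..m, g t = ∫ t in (-m)..m, g t :=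
    intervalIntegral.integral_add_adjacent_intervals (hgint _ _) (hgint _ _)
  have hneg : ∫ t in (-m)..(0:ℝ), g t = -∫ t in (0:ℝ)..m, g t := by
    have := intervalIntegral.integral_comp_neg (a := (0:ℝ)) (b := m) g
    rw [neg_zero] at this
    rw [← this]
    rw [show (∫ x in (0:ℝ)..m, g (-x)) = ∫ x in (0:ℝ)..m, -g x by congr 1; funext x; rw [hgodd]]
    rw [intervalIntegral.integral_neg]
  rw [← hsplit, hneg]; ring


-- key pointwise ingredient for tail bounds
lemma Ef_le_tail {R x₀ l m y : ℝ} (hR : 0 < R) (hl : 0 ≤ l) (hm0 : 0 ≤ m) (hm : m ≤ |y - x₀|) :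
    Ef R x₀ l y ≤ Real.exp (l * Real.exp (-m ^ 2 / R ^ 2)) := by
  apply Real.exp_le_exp.2
  apply mul_le_mul_of_nonneg_left _ hl
  apply Real.exp_le_exp.2
  have h2 : m ^ 2 ≤ (y - x₀) ^ 2 := by
    calc m ^ 2 ≤ |y - x₀| ^ 2 := pow_le_pow_left₀ hm0 hm 2
      _ = (y - x₀) ^ 2 := sq_abs _
  rw [neg_div, neg_div, neg_le_neg_iff]
  exact div_le_div_of_nonneg_right h2 (by positivity)

lemma N_bound {R x₀ l : ℝ} (hR : 0 < R) (hl : 0 ≤ l) (hx0 : 0 < x₀) (hx1 : x₀ < 1) :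
    |∫ y in (0:ℝ)..1, (y - x₀) * Ef R x₀ l y| ≤
      Real.exp (l * Real.exp (-(min x₀ (1 - x₀)) ^ 2 / R ^ 2)) := by
  set m := min x₀ (1 - x₀) with hm
  have hm0 : 0 < m := lt_min hx0 (by linarith)
  have hmx : m ≤ x₀ := min_le_left _ _
  have hmy : m ≤ 1 - x₀ := min_le_right _ _
  set K := Real.exp (l * Real.exp (-m ^ 2 / R ^ 2)) with hK
  have hK0 : 0 < K := Real.exp_pos _
  set p := x₀ - m with hp
  set q := x₀ + m with hq
  have hp0 : 0 ≤ p := by simp [hp]; linarith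
  have hq1 : q ≤ 1 := by simp [hq]; linarith
  have e1 : (∫ y in (0:ℝ)..p, (y - x₀) * Ef R x₀ l y)
      + ∫ y in p..q, (y - x₀) * Ef R x₀ l y = ∫ y in (0:ℝ)..q, (y - x₀) * Ef R x₀ l y :=
    intervalIntegral.integral_add_adjacent_intervals (EfS_int _ _ _ _ _) (EfS_int _ _ _ _ _)
  have e2 : (∫ y in (0:ℝ)..q, (y - x₀) * Ef R x₀ l y)
      + ∫ y in q..(1:ℝ), (y - x₀) * Ef R x₀ l y = ∫ y in (0:ℝ)..1, (y - x₀) * Ef R x₀ l y :=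
    intervalIntegral.integral_add_adjacent_intervals (EfS_int _ _ _ _ _) (EfS_int _ _ _ _ _)
  have emid : ∫ y in p..q, (y - x₀) * Ef R x₀ l y = 0 := middle_zero R x₀ l m
  have b1 : |∫ y in (0:ℝ)..p, (y - x₀) * Ef R x₀ l y| ≤ K * p := by
    have := intervalIntegral.norm_integral_le_of_norm_le_const
      (a := (0:ℝ)) (b := p) (C := K) (f := fun y => (y - x₀) * Ef R x₀ l y) ?_
    · rw [Real.norm_eq_abs] at this
      calc |∫ y in (0:ℝ)..p, (y - x₀) * Ef R x₀ l y| ≤ K * |p - 0| := this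
        _ = K * p := by rw [sub_zero, abs_of_nonneg hp0]
    · intro y hy
      rw [Set.uIoc_of_le hp0] at hy
      obtain ⟨hy1, hy2⟩ := hy
      have hym : m ≤ |y - x₀| := by
        rw [abs_of_nonpos (by simp [hp] at hy2; linarith)]
        simp [hp] at hy2; linarith
      have habs : |y - x₀| ≤ 1 := by
        rw [abs_le]; constructor <;> nlinarith
      rw [Real.norm_eq_abs, abs_mul, abs_of_pos (Ef_pos R x₀ l y)]
      calc |y - x₀| * Ef R x₀ l y ≤ 1 * K := by
            apply mul_le_mul habs (Ef_le_tail hR hl hm0.le hym) (Ef_pos R x₀ l y).le zero_le_one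
        _ = K := one_mul K
  have b2 : |∫ y in q..(1:ℝ), (y - x₀) * Ef R x₀ l y| ≤ K * (1 - q) := by
    have := intervalIntegral.norm_integral_le_of_norm_le_const
      (a := q) (b := (1:ℝ)) (C := K) (f := fun y => (y - x₀) * Ef R x₀ l y) ?_
    · rw [Real.norm_eq_abs] at this
      calc |∫ y in q..(1:ℝ), (y - x₀) * Ef R x₀ l y| ≤ K * |1 - q| := this
        _ = K * (1 - q) := by rw [abs_of_nonneg (by linarith)]
    · intro y hy
      rw [Set.uIoc_of_le hq1] at hy
      obtain ⟨hy1, hy2⟩ := hy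
      have hym : m ≤ |y - x₀| := by
        rw [abs_of_nonneg (by simp [hq] at hy1; linarith)]
        simp [hq] at hy1; linarith
      have habs : |y - x₀| ≤ 1 := by
        rw [abs_le]; constructor <;> nlinarith
      rw [Real.norm_eq_abs, abs_mul, abs_of_pos (Ef_pos R x₀ l y)]
      calc |y - x₀| * Ef R x₀ l y ≤ 1 * K := by
            apply mul_le_mul habs (Ef_le_tail hR hl hm0.le hym) (Ef_pos R x₀ l y).le zero_le_one
        _ = K := one_mul K
  have hfin : (∫ y in (0:ℝ)..1, (y - x₀) * Ef R x₀ l y)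
      = (∫ y in (0:ℝ)..p, (y - x₀) * Ef R x₀ l y)
        + ∫ y in q..(1:ℝ), (y - x₀) * Ef R x₀ l y := by
    rw [← e2, ← e1, emid]; ring
  rw [hfin]
  have h2m : p + (1 - q) ≤ 1 := by simp [hp, hq]; linarith
  calc |(∫ y in (0:ℝ)..p, (y - x₀) * Ef R x₀ l y)
        + ∫ y in q..(1:ℝ), (y - x₀) * Ef R x₀ l y|
      ≤ |∫ y in (0:ℝ)..p, (y - x₀) * Ef R x₀ l y|
        + |∫ y in q..(1:ℝ), (y - x₀) * Ef R x₀ l y| := abs_add_le _ _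
    _ ≤ K * p + K * (1 - q) := add_le_add b1 b2
    _ = K * (p + (1 - q)) := by ring
    _ ≤ K * 1 := mul_le_mul_of_nonneg_left h2m hK0.le
    _ = K := mul_one K

lemma I0_lower {R x₀ l : ℝ} (hR : 0 < R) (hl : 1 ≤ l) (hx0 : 0 < x₀)
    (hend : x₀ + R / Real.sqrt l ≤ 1) :
    R / Real.sqrt l * Real.exp (l - 1) ≤ I0 R x₀ l := by
  have hl0 : (0:ℝ) < l := by linarith
  set r := R / Real.sqrt l with hr
  have hr0 : 0 < r := by positivity
  have e1 : (∫ y in (0:ℝ)..x₀, Ef R x₀ l y) + ∫ y in x₀..(x₀ + r), Ef R x₀ l y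
      = ∫ y in (0:ℝ)..(x₀ + r), Ef R x₀ l y :=
    intervalIntegral.integral_add_adjacent_intervals (Ef_int _ _ _ _ _) (Ef_int _ _ _ _ _)
  have e2 : (∫ y in (0:ℝ)..(x₀ + r), Ef R x₀ l y) + ∫ y in (x₀ + r)..(1:ℝ), Ef R x₀ l y
      = ∫ y in (0:ℝ)..1, Ef R x₀ l y :=
    intervalIntegral.integral_add_adjacent_intervals (Ef_int _ _ _ _ _) (Ef_int _ _ _ _ _)
  have n1 : 0 ≤ ∫ y in (0:ℝ)..x₀, Ef R x₀ l y :=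
    intervalIntegral.integral_nonneg hx0.le (fun y _ => (Ef_pos R x₀ l y).le)
  have n2 : 0 ≤ ∫ y in (x₀ + r)..(1:ℝ), Ef R x₀ l y :=
    intervalIntegral.integral_nonneg hend (fun y _ => (Ef_pos R x₀ l y).le)
  have hmid : r * Real.exp (l - 1) ≤ ∫ y in x₀..(x₀ + r), Ef R x₀ l y := by
    have hconst : ∫ y in x₀..(x₀ + r), Real.exp (l - 1) = r * Real.exp (l - 1) := by
      rw [intervalIntegral.integral_const]; simp
    rw [← hconst]
    apply intervalIntegral.integral_mono_on (by linarith)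
      (intervalIntegrable_const) (Ef_int _ _ _ _ _)
    intro y hy
    obtain ⟨hy1, hy2⟩ := hy
    rw [Ef]
    apply Real.exp_le_exp.2
    have hsq : (y - x₀) ^ 2 ≤ r ^ 2 := by nlinarith
    have hrsq : r ^ 2 = R ^ 2 / l := by
      rw [hr, div_pow, Real.sq_sqrt hl0.le]
    have h1 : -(1 / l) ≤ -(y - x₀) ^ 2 / R ^ 2 := by
      rw [neg_div, neg_le_neg_iff, div_le_div_iff₀ (by positivity) hl0]
      have hrl : r ^ 2 * l = R ^ 2 := by rw [hrsq]; field_simp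
      nlinarith [mul_le_mul_of_nonneg_right hsq hl0.le]
    have h2 : 1 - 1 / l ≤ Real.exp (-(y - x₀) ^ 2 / R ^ 2) := by
      calc 1 - 1 / l ≤ Real.exp (-(1 / l)) := by
            linarith [Real.add_one_le_exp (-(1 / l))]
        _ ≤ _ := Real.exp_le_exp.2 h1
    calc l - 1 = l * (1 - 1 / l) := by field_simp
      _ ≤ l * Real.exp (-(y - x₀) ^ 2 / R ^ 2) := mul_le_mul_of_nonneg_left h2 hl0.le
  rw [I0, ← e2, ← e1]
  linarith


lemma sqrt_tendsto_atTop : Tendsto Real.sqrt atTop atTop := by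
  apply tendsto_atTop_atTop.2
  intro b
  refine ⟨b ^ 2, fun a ha => ?_⟩
  calc b ≤ |b| := le_abs_self b
    _ = Real.sqrt (b ^ 2) := (Real.sqrt_sq_eq_abs b).symm
    _ ≤ Real.sqrt a := Real.sqrt_le_sqrt ha

lemma lin_exp_decay {γ : ℝ} (hγ : 0 < γ) :
    Tendsto (fun l : ℝ => l * Real.exp (-(γ * l))) atTop (nhds 0) := by
  have h1 : Tendsto (fun t : ℝ => t ^ 1 * Real.exp (-t)) atTop (nhds 0) :=
    tendsto_pow_mul_exp_neg_atTop_nhds_zero 1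
  have h2 : Tendsto (fun l : ℝ => γ * l) atTop atTop :=
    Tendsto.const_mul_atTop hγ tendsto_id
  have h3 := (h1.comp h2).const_mul (1 / γ)
  rw [mul_zero] at h3
  apply h3.congr
  intro l
  simp only [Function.comp_apply, pow_one]
  field_simp

lemma eps_sqrt_tendsto {R x₀ : ℝ} (hR : 0 < R) (hx0 : 0 < x₀) (hx1 : x₀ < 1) :
    Tendsto (fun l => |cva R x₀ l - x₀| * Real.sqrt l) atTop (nhds 0) := by
  set m := min x₀ (1 - x₀) with hm
  have hm0 : 0 < m := lt_min hx0 (by linarith)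
  set Cm := Real.exp (-m ^ 2 / R ^ 2) with hCm
  have hCm1 : Cm < 1 := by
    rw [hCm]
    apply Real.exp_lt_one_iff.2
    rw [neg_div]
    have : 0 < m ^ 2 / R ^ 2 := by positivity
    linarith
  have hγ : 0 < 1 - Cm := by linarith
  -- eventual bound
  have hRl : Tendsto (fun l : ℝ => R / Real.sqrt l) atTop (nhds 0) := by
    have := (tendsto_inv_atTop_zero.comp sqrt_tendsto_atTop).const_mul R
    rw [mul_zero] at this
    apply this.congr
    intro l
    simp [Function.comp_apply, div_eq_mul_inv]
  have hev : ∀ᶠ l : ℝ in atTop, |cva R x₀ l - x₀| * Real.sqrt l ≤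
      Real.exp 1 / R * (l * Real.exp (-((1 - Cm) * l))) := by
    have h1 : ∀ᶠ l : ℝ in atTop, R / Real.sqrt l ≤ 1 - x₀ :=
      hRl.eventually (eventually_le_nhds (by linarith))
    filter_upwards [h1, eventually_ge_atTop (1:ℝ)] with l hend hl1
    have hl0 : (0:ℝ) < l := by linarith
    have hsl : (0:ℝ) < Real.sqrt l := Real.sqrt_pos.2 hl0
    have hI0 := I0_pos R x₀ l
    have hIlow := I0_lower hR hl1 hx0 (by linarith)
    have hNb := N_bound hR (by linarith : (0:ℝ) ≤ l) hx0 hx1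
    rw [← hm, ← hCm] at hNb
    have hden : 0 < R / Real.sqrt l * Real.exp (l - 1) := by positivity
    have heq : cva R x₀ l - x₀ = (I1 R x₀ l - x₀ * I0 R x₀ l) / I0 R x₀ l := by
      rw [cva]; field_simp
    have habs : |cva R x₀ l - x₀| = |I1 R x₀ l - x₀ * I0 R x₀ l| / I0 R x₀ l := by
      rw [heq, abs_div, abs_of_pos hI0]
    have hub : |cva R x₀ l - x₀| ≤
        Real.exp (l * Cm) / (R / Real.sqrt l * Real.exp (l - 1)) := by
      rw [habs]
      apply div_le_div₀ (Real.exp_pos _).le _ hden hIlow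
      rw [num_eq]; exact hNb
    have hkey : Real.exp (l * Cm) / (R / Real.sqrt l * Real.exp (l - 1)) * Real.sqrt l
        = Real.exp 1 / R * ((Real.sqrt l * Real.sqrt l) * Real.exp (-((1 - Cm) * l))) := by
      have hexp : Real.exp (l * Cm) =
          Real.exp 1 * Real.exp (-((1 - Cm) * l)) * Real.exp (l - 1) := by
        rw [← Real.exp_add, ← Real.exp_add]; congr 1; ring
      rw [hexp]
      field_simp
    have hll : Real.sqrt l * Real.sqrt l = l := Real.mul_self_sqrt hl0.le
    calc |cva R x₀ l - x₀| * Real.sqrt l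
        ≤ Real.exp (l * Cm) / (R / Real.sqrt l * Real.exp (l - 1)) * Real.sqrt l :=
          mul_le_mul_of_nonneg_right hub hsl.le
      _ = Real.exp 1 / R * (l * Real.exp (-((1 - Cm) * l))) := by rw [hkey, hll]
  have hG : Tendsto (fun l : ℝ => Real.exp 1 / R * (l * Real.exp (-((1 - Cm) * l)))) atTop
      (nhds 0) := by
    have := (lin_exp_decay hγ).const_mul (Real.exp 1 / R)
    rw [mul_zero] at this
    exact this
  apply tendsto_of_tendsto_of_tendsto_of_le_of_le' tendsto_const_nhds hG
  · filter_upwards [eventually_ge_atTop (0:ℝ)] with l hl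
    positivity
  · exact hev


noncomputable def Sl (R x₀ l : ℝ) : ℝ :=
  ⨆ x : Set.Icc (0:ℝ) 1, |Ef R x₀ l ↑x * (cva R x₀ l - ↑x)|

instance : Nonempty (Set.Icc (0:ℝ) 1) := ⟨⟨0, by norm_num⟩⟩

lemma bdd_above (R x₀ l : ℝ) :
    BddAbove (Set.range fun x : Set.Icc (0:ℝ) 1 => |Ef R x₀ l ↑x * (cva R x₀ l - ↑x)|) := by
  refine ⟨Real.exp |l| * (|cva R x₀ l| + 1), ?_⟩
  rintro v ⟨⟨x, hx0, hx1⟩, rfl⟩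
  simp only
  rw [abs_mul, abs_of_pos (Ef_pos _ _ _ _)]
  apply mul_le_mul _ _ (abs_nonneg _) (Real.exp_pos _).le
  · rw [Ef]
    apply Real.exp_le_exp.2
    have hC0 : 0 < Real.exp (-(x - x₀) ^ 2 / R ^ 2) := Real.exp_pos _
    have hC1 : Real.exp (-(x - x₀) ^ 2 / R ^ 2) ≤ 1 := by
      apply Real.exp_le_one_iff.2
      have h1 : 0 ≤ (x - x₀) ^ 2 / R ^ 2 := by positivity
      rw [show -(x - x₀) ^ 2 / R ^ 2 = -((x - x₀) ^ 2 / R ^ 2) by ring]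
      linarith
    nlinarith [le_abs_self l, abs_nonneg l]
  · have h1 : |cva R x₀ l - x| ≤ |cva R x₀ l| + |x| := by
      have := abs_add_le (cva R x₀ l) (-x)
      simpa [sub_eq_add_neg] using this
    have h2 : |x| ≤ 1 := abs_le.2 ⟨by linarith, hx1⟩
    linarith

lemma Sl_nonneg (R x₀ l : ℝ) : 0 ≤ Sl R x₀ l := by
  have := le_ciSup (bdd_above R x₀ l) (⟨0, by norm_num⟩ : Set.Icc (0:ℝ) 1)
  exact le_trans (abs_nonneg _) this

lemma sup_upper {R x₀ l : ℝ} (hR : 0 < R) (hx0 : 0 < x₀) (hx1 : x₀ < 1) (hl : 16 ≤ l) :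
    Sl R x₀ l ≤
      R * Real.exp l / Real.sqrt (2 * Real.exp 1 * (l * (1 - 1 / Real.sqrt (Real.sqrt l))))
        + Real.exp (l - l / (2 * Real.sqrt (Real.sqrt l)))
        + Real.exp l * |cva R x₀ l - x₀| := by
  apply ciSup_le
  rintro ⟨x, hx0', hx1'⟩
  simp only
  have hxb : |x - x₀| ≤ 1 := abs_le.2 ⟨by linarith, by linarith⟩
  rw [abs_mul, abs_of_pos (Ef_pos _ _ _ _)]
  have htr : |cva R x₀ l - x| ≤ |x - x₀| + |cva R x₀ l - x₀| := by
    have h1 := abs_sub_le (cva R x₀ l) x₀ x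
    have h2 : |x₀ - x| = |x - x₀| := abs_sub_comm _ _
    linarith
  calc Ef R x₀ l x * |cva R x₀ l - x|
      ≤ Ef R x₀ l x * (|x - x₀| + |cva R x₀ l - x₀|) :=
        mul_le_mul_of_nonneg_left htr (Ef_pos _ _ _ _).le
    _ = Ef R x₀ l x * |x - x₀| + Ef R x₀ l x * |cva R x₀ l - x₀| := by ring
    _ ≤ (R * Real.exp l / Real.sqrt (2 * Real.exp 1 * (l * (1 - 1 / Real.sqrt (Real.sqrt l))))
          + Real.exp (l - l / (2 * Real.sqrt (Real.sqrt l))))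
        + Real.exp l * |cva R x₀ l - x₀| :=
        add_le_add (pointwise_upper hR hl x hxb)
          (mul_le_mul_of_nonneg_right (Ef_le R x₀ l x (by linarith)) (abs_nonneg _))

lemma sup_lower {R x₀ l : ℝ} (hR : 0 < R) (hx0 : 0 < x₀) (hl : 1 ≤ l)
    (hend : x₀ + R / (Real.sqrt 2 * Real.sqrt l) ≤ 1) :
    Real.exp (l - 1 / 2) * (R / (Real.sqrt 2 * Real.sqrt l) - |cva R x₀ l - x₀|)
      ≤ Sl R x₀ l := by
  have hl0 : (0:ℝ) < l := by linarith
  have hsl : 0 < Real.sqrt l := Real.sqrt_pos.2 hl0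
  have hs2 : 0 < Real.sqrt 2 := Real.sqrt_pos.2 (by norm_num)
  set r := R / (Real.sqrt 2 * Real.sqrt l) with hrdef
  have hr0 : 0 < r := by positivity
  set x₁ := x₀ + r with hx₁def
  have hmem : x₁ ∈ Set.Icc (0:ℝ) 1 := ⟨by simp [hx₁def]; linarith, hend⟩
  have hS := le_ciSup (bdd_above R x₀ l) (⟨x₁, hmem⟩ : Set.Icc (0:ℝ) 1)
  simp only at hS
  by_cases hc : r - |cva R x₀ l - x₀| ≤ 0
  · have h0 : 0 ≤ Sl R x₀ l := Sl_nonneg R x₀ l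
    have : Real.exp (l - 1 / 2) * (r - |cva R x₀ l - x₀|) ≤ 0 :=
      mul_nonpos_of_nonneg_of_nonpos (Real.exp_pos _).le hc
    linarith
  · push_neg at hc
    have hEf1 : Real.exp (l - 1 / 2) ≤ Ef R x₀ l x₁ := by
      rw [Ef]
      apply Real.exp_le_exp.2
      have hx₁x₀ : x₁ - x₀ = r := by simp [hx₁def]
      have hr2 : (x₁ - x₀) ^ 2 / R ^ 2 = 1 / (2 * l) := by
        rw [hx₁x₀, hrdef, div_pow, mul_pow, Real.sq_sqrt (by norm_num : (0:ℝ) ≤ 2),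
          Real.sq_sqrt hl0.le]
        field_simp
      rw [show -(x₁ - x₀) ^ 2 / R ^ 2 = -((x₁ - x₀) ^ 2 / R ^ 2) by ring, hr2]
      have h2 : 1 - 1 / (2 * l) ≤ Real.exp (-(1 / (2 * l))) := by
        linarith [Real.add_one_le_exp (-(1 / (2 * l)))]
      calc l - 1 / 2 = l * (1 - 1 / (2 * l)) := by field_simp
        _ ≤ l * Real.exp (-(1 / (2 * l))) := mul_le_mul_of_nonneg_left h2 hl0.le
    have habs1 : r - |cva R x₀ l - x₀| ≤ |cva R x₀ l - x₁| := by
      have h1 := abs_sub_le x₁ (cva R x₀ l) x₀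
      have h2 : |x₁ - x₀| = r := by rw [show x₁ - x₀ = r by simp [hx₁def], abs_of_pos hr0]
      have h3 : |cva R x₀ l - x₁| = |x₁ - cva R x₀ l| := abs_sub_comm _ _
      linarith
    calc Real.exp (l - 1 / 2) * (r - |cva R x₀ l - x₀|)
        ≤ Ef R x₀ l x₁ * |cva R x₀ l - x₁| :=
          mul_le_mul hEf1 habs1 hc.le (Ef_pos _ _ _ _).le
      _ = |Ef R x₀ l x₁ * (cva R x₀ l - x₁)| := by
          rw [abs_mul, abs_of_pos (Ef_pos _ _ _ _)]
      _ ≤ Sl R x₀ l := hS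


theorem aux_main (R : ℝ) (hR : 0 < R) (x₀ : ℝ) (hx₀ : x₀ ∈ Set.Ioo (0:ℝ) 1) :
    ∃ κ : ℝ, 0 < κ ∧ ∃ α : ℝ,
      Tendsto (fun l : ℝ => Sl R x₀ l / (l ^ α * Real.exp l)) atTop (nhds κ) := by
  obtain ⟨hx0, hx1⟩ := hx₀
  have hs2 : (0:ℝ) < Real.sqrt 2 := Real.sqrt_pos.2 (by norm_num)
  have h2e : (0:ℝ) < Real.sqrt (2 * Real.exp 1) :=
    Real.sqrt_pos.2 (by positivity)
  refine ⟨R / Real.sqrt (2 * Real.exp 1), by positivity, -(1/2), ?_⟩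
  set ε : ℝ → ℝ := fun l => |cva R x₀ l - x₀| with hεdef
  have heps := eps_sqrt_tendsto hR hx0 hx1
  -- the comparison functions
  set Lo : ℝ → ℝ := fun l => Real.exp (-(1/2)) * (R / Real.sqrt 2 - ε l * Real.sqrt l)
    with hLodef
  set U : ℝ → ℝ := fun l =>
      R / Real.sqrt (2 * Real.exp 1 * (1 - 1 / Real.sqrt (Real.sqrt l)))
        + Real.sqrt l * Real.exp (-(l / (2 * Real.sqrt (Real.sqrt l))))
        + ε l * Real.sqrt l
    with hUdef
  -- limit of Lo
  have hsqe : Real.sqrt (2 * Real.exp 1) = Real.sqrt 2 * Real.exp (1/2) := by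
    rw [Real.sqrt_mul (by norm_num : (0:ℝ) ≤ 2)]
    congr 1
    rw [show Real.exp 1 = Real.exp (1/2) ^ 2 by
        rw [sq, ← Real.exp_add]; norm_num,
      Real.sqrt_sq (Real.exp_pos _).le]
  have hLoT : Tendsto Lo atTop (nhds (R / Real.sqrt (2 * Real.exp 1))) := by
    have h1 : Tendsto (fun l => R / Real.sqrt 2 - ε l * Real.sqrt l) atTop
        (nhds (R / Real.sqrt 2 - 0)) := tendsto_const_nhds.sub heps
    have h2 := h1.const_mul (Real.exp (-(1/2)))
    have h3 : Real.exp (-(1/2)) * (R / Real.sqrt 2 - 0) = R / Real.sqrt (2 * Real.exp 1) := by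
      rw [sub_zero, hsqe, Real.exp_neg]
      field_simp
    rw [h3] at h2
    exact h2
  -- limit of U
  have hssT : Tendsto (fun l : ℝ => Real.sqrt (Real.sqrt l)) atTop atTop :=
    sqrt_tendsto_atTop.comp sqrt_tendsto_atTop
  have hinv : Tendsto (fun l : ℝ => 1 / Real.sqrt (Real.sqrt l)) atTop (nhds 0) := by
    have := tendsto_inv_atTop_zero.comp hssT
    apply this.congr
    intro l
    simp [Function.comp_apply, one_div]
  have hUT : Tendsto U atTop (nhds (R / Real.sqrt (2 * Real.exp 1))) := by
    have t1 : Tendsto (fun l : ℝ =>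
        R / Real.sqrt (2 * Real.exp 1 * (1 - 1 / Real.sqrt (Real.sqrt l)))) atTop
        (nhds (R / Real.sqrt (2 * Real.exp 1))) := by
      have i1 : Tendsto (fun l : ℝ => 2 * Real.exp 1 * (1 - 1 / Real.sqrt (Real.sqrt l)))
          atTop (nhds (2 * Real.exp 1)) := by
        have := ((tendsto_const_nhds : Tendsto (fun _ : ℝ => (1:ℝ)) atTop (nhds 1)).sub
          hinv).const_mul (2 * Real.exp 1)
        rw [sub_zero, mul_one] at this
        exact this
      have i2 := (Real.continuous_sqrt.tendsto (2 * Real.exp 1)).comp i1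
      exact tendsto_const_nhds.div i2 (ne_of_gt h2e)
    have t2 : Tendsto (fun l : ℝ =>
        Real.sqrt l * Real.exp (-(l / (2 * Real.sqrt (Real.sqrt l))))) atTop (nhds 0) := by
      have hg : Tendsto (fun t : ℝ => t * Real.exp (-(t / 2))) atTop (nhds 0) := by
        apply (lin_exp_decay (by norm_num : (0:ℝ) < 1/2)).congr
        intro t
        rw [show -((1:ℝ)/2 * t) = -(t/2) by ring]
      have hcomp := hg.comp sqrt_tendsto_atTop
      apply tendsto_of_tendsto_of_tendsto_of_le_of_le' tendsto_const_nhds hcomp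
      · filter_upwards [eventually_ge_atTop (0:ℝ)] with l hl
        positivity
      · filter_upwards [eventually_ge_atTop (16:ℝ)] with l hl
        simp only [Function.comp_apply]
        have hl0 : (0:ℝ) < l := by linarith
        have hsl : 0 < Real.sqrt l := Real.sqrt_pos.2 hl0
        have hss : 0 < Real.sqrt (Real.sqrt l) := Real.sqrt_pos.2 hsl
        apply mul_le_mul_of_nonneg_left _ hsl.le
        apply Real.exp_le_exp.2
        rw [neg_le_neg_iff]
        -- √l / 2 ≤ l / (2 √√l)
        have hsll : Real.sqrt l ≤ l := by
          have h := Real.sqrt_le_sqrt (show l ≤ l ^ 2 by nlinarith)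
          rwa [Real.sqrt_sq hl0.le] at h
        have hssl : Real.sqrt (Real.sqrt l) ≤ Real.sqrt l := Real.sqrt_le_sqrt hsll
        rw [div_le_div_iff₀ (by norm_num) (by positivity)]
        have key : Real.sqrt l * Real.sqrt (Real.sqrt l) ≤ l := by
          calc Real.sqrt l * Real.sqrt (Real.sqrt l) ≤ Real.sqrt l * Real.sqrt l :=
                mul_le_mul_of_nonneg_left hssl hsl.le
            _ = l := Real.mul_self_sqrt hl0.le
        nlinarith
    have hsum := (t1.add t2).add heps
    rw [add_zero, add_zero] at hsum
    exact hsum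
  -- squeeze
  apply tendsto_of_tendsto_of_tendsto_of_le_of_le' hLoT hUT
  · -- Lo ≤ S / d
    have hRl : Tendsto (fun l : ℝ => R / Real.sqrt l) atTop (nhds 0) := by
      have := (tendsto_inv_atTop_zero.comp sqrt_tendsto_atTop).const_mul R
      rw [mul_zero] at this
      apply this.congr
      intro l
      simp [Function.comp_apply, div_eq_mul_inv]
    have hendev : ∀ᶠ l : ℝ in atTop, R / Real.sqrt l ≤ 1 - x₀ :=
      hRl.eventually (eventually_le_nhds (by linarith))
    filter_upwards [hendev, eventually_ge_atTop (16:ℝ)] with l hend hl16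
    have hl0 : (0:ℝ) < l := by linarith
    have hsl : 0 < Real.sqrt l := Real.sqrt_pos.2 hl0
    have hend2 : x₀ + R / (Real.sqrt 2 * Real.sqrt l) ≤ 1 := by
      have h1 : R / (Real.sqrt 2 * Real.sqrt l) ≤ R / Real.sqrt l := by
        apply div_le_div_of_nonneg_left hR.le hsl
        calc Real.sqrt l = 1 * Real.sqrt l := (one_mul _).symm
          _ ≤ Real.sqrt 2 * Real.sqrt l := by
              apply mul_le_mul_of_nonneg_right _ hsl.le
              rw [show (1:ℝ) = Real.sqrt 1 by rw [Real.sqrt_one]]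
              exact Real.sqrt_le_sqrt (by norm_num)
      linarith
    have hlow := sup_lower hR hx0 (by linarith) hend2
    have hd : l ^ (-(1/2) : ℝ) * Real.exp l = Real.exp l / Real.sqrt l := by
      rw [Real.rpow_neg hl0.le, Real.sqrt_eq_rpow]
      field_simp
    have hd0 : 0 < l ^ (-(1/2) : ℝ) * Real.exp l := by
      rw [hd]; positivity
    have key : Lo l = Real.exp (l - 1 / 2) *
        (R / (Real.sqrt 2 * Real.sqrt l) - ε l) / (l ^ (-(1/2) : ℝ) * Real.exp l) := by
      rw [hd, hLodef]
      simp only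
      rw [div_div_eq_mul_div, Real.exp_sub, Real.exp_neg]
      field_simp
    rw [key]
    gcongr
  · -- S / d ≤ U
    filter_upwards [eventually_ge_atTop (16:ℝ)] with l hl16
    have hl0 : (0:ℝ) < l := by linarith
    have hsl : 0 < Real.sqrt l := Real.sqrt_pos.2 hl0
    have hss : 0 < Real.sqrt (Real.sqrt l) := Real.sqrt_pos.2 hsl
    have hss2 : 2 ≤ Real.sqrt (Real.sqrt l) := ssl_ge_two hl16
    have hδ : 1 / Real.sqrt (Real.sqrt l) ≤ 1/2 := by
      rw [div_le_div_iff₀ hss (by norm_num)]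
      linarith
    have hupp := sup_upper hR hx0 hx1 hl16
    have hd : l ^ (-(1/2) : ℝ) * Real.exp l = Real.exp l / Real.sqrt l := by
      rw [Real.rpow_neg hl0.le, Real.sqrt_eq_rpow]
      field_simp
    have hd0 : 0 < l ^ (-(1/2) : ℝ) * Real.exp l := by
      rw [hd]; positivity
    have key : (R * Real.exp l /
          Real.sqrt (2 * Real.exp 1 * (l * (1 - 1 / Real.sqrt (Real.sqrt l))))
        + Real.exp (l - l / (2 * Real.sqrt (Real.sqrt l)))
        + Real.exp l * ε l) / (l ^ (-(1/2) : ℝ) * Real.exp l) = U l := by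
      have hfac : Real.sqrt (2 * Real.exp 1 * (l * (1 - 1 / Real.sqrt (Real.sqrt l))))
          = Real.sqrt l * Real.sqrt (2 * Real.exp 1 * (1 - 1 / Real.sqrt (Real.sqrt l))) := by
        rw [show 2 * Real.exp 1 * (l * (1 - 1 / Real.sqrt (Real.sqrt l)))
            = l * (2 * Real.exp 1 * (1 - 1 / Real.sqrt (Real.sqrt l))) by ring,
          Real.sqrt_mul hl0.le]
      have hpos2 : 0 < Real.sqrt (2 * Real.exp 1 * (1 - 1 / Real.sqrt (Real.sqrt l))) := by
        apply Real.sqrt_pos.2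
        have : (0:ℝ) < 1 - 1 / Real.sqrt (Real.sqrt l) := by linarith
        positivity
      rw [hd, hUdef]
      simp only
      rw [hfac, div_div_eq_mul_div, Real.exp_sub, Real.exp_neg]
      set Q := Real.sqrt (2 * Real.exp 1 * (1 - 1 / Real.sqrt (Real.sqrt l))) with hQdef
      field_simp [hsl.ne', hpos2.ne', Real.exp_ne_zero]
    rw [← key]
    gcongr

end MaximalStrainAux

/-- **Scaling relationship between the excursion level and the maximal
strain.**  For the deterministic conditional-mean profile
`ξ_l(x) = l · C(x − x₀)` with `C(x) = exp(−x²/R²)`, the solution of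
`−(e^{−ξ_l} u_l′)′ = 1` on `(0,1)` with `u_l(0) = u_l(1) = 0` has derivative
`u_l′(x) = e^{ξ_l(x)}(c_l − x)`, and there exist `κ > 0` and `α ∈ ℝ` such
that `sup_{[0,1]} |u_l′| / (l^α e^l) → κ` as `l → ∞`, i.e.
`sup_{[0,1]} |u_l′| ∼ κ l^α e^l`. -/
theorem maximal_strain_scaling (R : ℝ) (hR : 0 < R) (x₀ : ℝ)
    (hx₀ : x₀ ∈ Set.Ioo (0:ℝ) 1) :
    let C : ℝ → ℝ := fun x => Real.exp (-x ^ 2 / R ^ 2)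
    let ξ : ℝ → ℝ → ℝ := fun l x => l * C (x - x₀)
    let c : ℝ → ℝ := fun l =>
      (∫ y in (0:ℝ)..1, y * Real.exp (ξ l y)) / ∫ y in (0:ℝ)..1, Real.exp (ξ l y)
    let u' : ℝ → ℝ → ℝ := fun l x => Real.exp (ξ l x) * (c l - x)
    ∃ κ : ℝ, 0 < κ ∧ ∃ α : ℝ,
      Tendsto (fun l : ℝ =>
          (⨆ x : Set.Icc (0:ℝ) 1, |u' l x|) / (l ^ α * Real.exp l))
        atTop (nhds κ) := by
  intro C ξ c u'
  exact aux_main R hR x₀ hx₀
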